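/- Assume the u_j are pairwise distinct and that sup_{x ∈ [0,1]} | x − (1/n) Σ_{j=1}^n 1(u_j ≤ x) | → 0 as n → ∞. Then: (i) ≺ is a strict total order on [0,1], i.e. any two distinct points of [0,1] are comparable; (ii) φ_k → φ uniformly on [0,1] as k → ∞; (iii) φ is continuous at every point of [0,1] \ { u_j : j ≥ 1 }; (iv) φ preserves Lebesgue measure, i.e. φ_# Leb = Leb, and hence the pushforward μ_φ of Leb under x ↦ (x, φ(x)) is a permuton (a probability measure on [0,1]² both of whose coordinate marginals equal Leb). -/

import Mathlib

open MeasureTheory Filter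

/-- `I(x,y) = (min(x,y), max(x,y)]`. -/
def gapInterval (x y : ℝ) : Set ℝ := Set.Ioc (min x y) (max x y)

/-- `i(x,y) = inf { j ≥ 1 : u_j ∈ I(x,y) } ∈ ℕ ∪ {∞}` (with `inf ∅ = ∞`). -/
noncomputable def firstIdx (u : ℕ → ℝ) (x y : ℝ) : ℕ∞ :=
  sInf ((fun j : ℕ => (j : ℕ∞)) '' {j : ℕ | 1 ≤ j ∧ u j ∈ gapInterval x y})

/-- `x ≺ y` iff `i(x,y) < ∞` and `(y − x) · s_{i(x,y)} > 0`. -/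
def Prec (u s : ℕ → ℝ) (x y : ℝ) : Prop :=
  ∃ j : ℕ, firstIdx u x y = (j : ℕ∞) ∧ (y - x) * s j > 0

/-- `φ_k(x) = Leb({ y ∈ [0,1] : y ≺ x and i(x,y) ≤ k })`. -/
noncomputable def phiK (u s : ℕ → ℝ) (k : ℕ) (x : ℝ) : ℝ :=
  (volume {y : ℝ | y ∈ Set.Icc (0:ℝ) 1 ∧ Prec u s y x ∧ firstIdx u x y ≤ (k : ℕ∞)}).toReal

/-- `φ(x) = Leb({ y ∈ [0,1] : y ≺ x })`. -/
noncomputable def phi (u s : ℕ → ℝ) (x : ℝ) : ℝ :=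
  (volume {y : ℝ | y ∈ Set.Icc (0:ℝ) 1 ∧ Prec u s y x}).toReal


lemma mem_gapInterval {x y t : ℝ} : t ∈ gapInterval x y ↔ (x < t ↔ t ≤ y) := by
  simp only [gapInterval, Set.mem_Ioc, min_lt_iff, le_max_iff]
  constructor
  · rintro ⟨h1, h2⟩
    constructor
    · intro _
      rcases h2 with h | h
      · rcases h1 with h' | h' <;> [linarith; linarith]
      · exact h
    · intro ht
      rcases h1 with h | h <;> [exact h; linarith]
  · intro h
    by_cases hx : x < t
    · have := h.mp hx
      exact ⟨Or.inl hx, Or.inr this⟩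
    · push_neg at hx
      have : ¬ t ≤ y := fun ht => hx.not_gt (h.mpr ht)
      push_neg at this
      exact ⟨Or.inr this, Or.inl hx⟩

lemma gapInterval_comm (x y : ℝ) : gapInterval x y = gapInterval y x := by
  unfold gapInterval; rw [min_comm, max_comm]

lemma firstIdx_comm (u : ℕ → ℝ) (x y : ℝ) : firstIdx u x y = firstIdx u y x := by
  unfold firstIdx; rw [gapInterval_comm]

lemma mem_gapInterval' {x y t : ℝ} : t ∈ gapInterval x y ↔ ¬ ((t ≤ x) ↔ (t ≤ y)) := by
  rw [mem_gapInterval]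
  constructor
  · intro h
    intro hc
    by_cases hx : x < t
    · have := h.mp hx; have := hc.mpr this; linarith
    · push_neg at hx; exact hx.not_gt (h.mpr (hc.mp hx))
  · intro h
    constructor
    · intro hx
      by_contra hy
      exact h ⟨fun ht => absurd ht (by linarith), fun ht => absurd ht hy⟩
    · intro ht
      by_contra hx
      push_neg at hx
      exact h ⟨fun _ => ht, fun _ => hx⟩


section FI
variable {u : ℕ → ℝ} {x y : ℝ}

lemma sInf_image_coe_of_nonempty {S : Set ℕ} (hne : S.Nonempty) :
    sInf ((fun j : ℕ => (j : ℕ∞)) '' S) = ((sInf S : ℕ) : ℕ∞) := by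
  apply le_antisymm
  · exact sInf_le ⟨sInf S, Nat.sInf_mem hne, rfl⟩
  · apply le_sInf
    rintro a ⟨m, hm, rfl⟩
    simpa using (Nat.cast_le (α := ℕ∞)).mpr (Nat.sInf_le hm)

lemma firstIdx_spec (hne : ∃ j, 1 ≤ j ∧ u j ∈ gapInterval x y) :
    ∃ j : ℕ, firstIdx u x y = (j : ℕ∞) ∧ 1 ≤ j ∧ u j ∈ gapInterval x y ∧
      ∀ i, 1 ≤ i → i < j → u i ∉ gapInterval x y := by
  classical
  obtain ⟨j0, hj0⟩ := hne
  have hne' : {j : ℕ | 1 ≤ j ∧ u j ∈ gapInterval x y}.Nonempty := ⟨j0, hj0⟩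
  have hmem := Nat.sInf_mem hne'
  refine ⟨sInf {j : ℕ | 1 ≤ j ∧ u j ∈ gapInterval x y},
    sInf_image_coe_of_nonempty hne', hmem.1, hmem.2, fun i hi1 hi hmemi => ?_⟩
  have : sInf {j : ℕ | 1 ≤ j ∧ u j ∈ gapInterval x y} ≤ i :=
    Nat.sInf_le (show i ∈ {j : ℕ | 1 ≤ j ∧ u j ∈ gapInterval x y} from ⟨hi1, hmemi⟩)
  omega

lemma firstIdx_eq_coe_iff {j : ℕ} :
    firstIdx u x y = (j : ℕ∞) ↔
      (1 ≤ j ∧ u j ∈ gapInterval x y ∧ ∀ i, 1 ≤ i → i < j → u i ∉ gapInterval x y) := by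
  constructor
  · intro h
    by_cases hne : ∃ j, 1 ≤ j ∧ u j ∈ gapInterval x y
    · obtain ⟨j', hj', h1, h2, h3⟩ := firstIdx_spec hne
      rw [h] at hj'
      have : j = j' := by exact_mod_cast hj'
      subst this; exact ⟨h1, h2, h3⟩
    · exfalso
      have : {j : ℕ | 1 ≤ j ∧ u j ∈ gapInterval x y} = ∅ := by
        rw [Set.eq_empty_iff_forall_notMem]; rintro i ⟨hi1, hi2⟩; exact hne ⟨i, hi1, hi2⟩
      rw [firstIdx, this] at h
      simp at h
  · rintro ⟨h1, h2, h3⟩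
    obtain ⟨j', hj', h1', h2', h3'⟩ := firstIdx_spec ⟨j, h1, h2⟩
    have : j = j' := by
      by_contra hne
      rcases Nat.lt_or_ge j j' with hlt | hge
      · exact h3' j h1 hlt h2
      · have : j' < j := by omega
        exact h3 j' h1' this h2'
    subst this; exact hj'

lemma firstIdx_le_iff {k : ℕ} :
    firstIdx u x y ≤ (k : ℕ∞) ↔ ∃ j, 1 ≤ j ∧ j ≤ k ∧ u j ∈ gapInterval x y := by
  constructor
  · intro h
    by_cases hne : ∃ j, 1 ≤ j ∧ u j ∈ gapInterval x y
    · obtain ⟨j', hj', h1, h2, _⟩ := firstIdx_spec hne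
      rw [hj'] at h
      exact ⟨j', h1, by exact_mod_cast h, h2⟩
    · exfalso
      have : {j : ℕ | 1 ≤ j ∧ u j ∈ gapInterval x y} = ∅ := by
        rw [Set.eq_empty_iff_forall_notMem]; rintro i ⟨hi1, hi2⟩; exact hne ⟨i, hi1, hi2⟩
      rw [firstIdx, this] at h
      simp at h
  · rintro ⟨j, h1, hk, hmem⟩
    calc firstIdx u x y ≤ (j : ℕ∞) := sInf_le ⟨j, ⟨h1, hmem⟩, rfl⟩
      _ ≤ (k : ℕ∞) := by exact_mod_cast hk

lemma gapInterval_ne {x y t : ℝ} (h : t ∈ gapInterval x y) : x ≠ y := by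
  rintro rfl
  rw [mem_gapInterval] at h
  rcases lt_or_ge x t with hx | hx
  · exact absurd (h.mp hx) (by linarith)
  · exact absurd (h.mpr hx) (by linarith)

end FI

section Transfer
variable {u s : ℕ → ℝ} {x x' y : ℝ} {j k : ℕ}

lemma prec_iff_of_firstIdx (h : firstIdx u x y = (j : ℕ∞)) :
    Prec u s x y ↔ (y - x) * s j > 0 := by
  constructor
  · rintro ⟨j', hj', hsgn⟩
    rw [h] at hj'
    have : j = j' := by exact_mod_cast hj'
    subst this; exact hsgn
  · intro hsgn; exact ⟨j, h, hsgn⟩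

lemma side_iff_of_not_mem (hni : u i ∉ gapInterval x x') : (x < u i ↔ x' < u i) := by
  rw [mem_gapInterval] at hni
  constructor
  · intro h; by_contra h'; push_neg at h'
    exact hni (iff_of_true h h')
  · intro h; by_contra h'; push_neg at h'
    exact hni (iff_of_false (not_lt.mpr h') (not_le.mpr h))

lemma firstIdx_transfer (hside : ∀ i, 1 ≤ i → i ≤ k → u i ∉ gapInterval x x')
    (hj : firstIdx u x y = (j : ℕ∞)) (hjk : j ≤ k) :
    firstIdx u x' y = (j : ℕ∞) ∧ x ≠ y ∧ x' ≠ y ∧ (x < y ↔ x' < y) := by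
  obtain ⟨h1, hmem, hmin⟩ := firstIdx_eq_coe_iff.mp hj
  have htrans : ∀ i, 1 ≤ i → i ≤ k → (u i ∈ gapInterval x' y ↔ u i ∈ gapInterval x y) := by
    intro i hi1 hik
    rw [mem_gapInterval, mem_gapInterval, ← side_iff_of_not_mem (hside i hi1 hik)]
  have hmem' : u j ∈ gapInterval x' y := (htrans j h1 hjk).mpr hmem
  have hfi' : firstIdx u x' y = (j : ℕ∞) :=
    firstIdx_eq_coe_iff.mpr ⟨h1, hmem', fun i hi1 hilt hm =>
      hmin i hi1 hilt ((htrans i hi1 (le_of_lt (lt_of_lt_of_le hilt hjk))).mp hm)⟩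
  refine ⟨hfi', gapInterval_ne hmem, gapInterval_ne hmem', ?_⟩
  rw [mem_gapInterval] at hmem hmem'
  rcases le_or_gt (u j) y with h | h
  · exact iff_of_true (lt_of_lt_of_le (hmem.mpr h) h) (lt_of_lt_of_le (hmem'.mpr h) h)
  · have hx : u j ≤ x := by
      by_contra hc; push_neg at hc; exact absurd (hmem.mp hc) (not_le.mpr h)
    have hx' : u j ≤ x' := by
      by_contra hc; push_neg at hc; exact absurd (hmem'.mp hc) (not_le.mpr h)
    exact iff_of_false (by linarith) (by linarith)

lemma sign_iff (hs1 : s j = 1 ∨ s j = -1) (hxy : x ≠ y) (hx'y : x' ≠ y)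
    (hiff : x < y ↔ x' < y) :
    ((y - x) * s j > 0 ↔ (y - x') * s j > 0) ∧ ((x - y) * s j > 0 ↔ (x' - y) * s j > 0) := by
  have hiff' : y < x ↔ y < x' := by
    constructor
    · intro hh
      rcases hx'y.lt_or_gt with h' | h'
      · exact absurd (hiff.mpr h') (by linarith)
      · exact h'
    · intro hh
      rcases hxy.lt_or_gt with h' | h'
      · exact absurd (hiff.mp h') (by linarith)
      · exact h'
  rcases hs1 with h | h <;> rw [h] <;> constructor <;> constructor <;> intro hh
  · exact by nlinarith [hiff.mp (by linarith : x < y)]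
  · exact by nlinarith [hiff.mpr (by linarith : x' < y)]
  · exact by nlinarith [hiff'.mp (by linarith : y < x)]
  · exact by nlinarith [hiff'.mpr (by linarith : y < x')]
  · exact by nlinarith [hiff'.mp (by nlinarith : y < x)]
  · exact by nlinarith [hiff'.mpr (by nlinarith : y < x')]
  · exact by nlinarith [hiff.mp (by nlinarith : x < y)]
  · exact by nlinarith [hiff.mpr (by nlinarith : x' < y)]

/-- Moving one argument within a region not separated by `u_1,…,u_k` does not change the
first index nor the order relation, provided the first index is at most `k`. -/
lemma prec_transfer (hs1 : s j = 1 ∨ s j = -1)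
    (hside : ∀ i, 1 ≤ i → i ≤ k → u i ∉ gapInterval x x')
    (hj : firstIdx u x y = (j : ℕ∞)) (hjk : j ≤ k) :
    firstIdx u x' y = (j : ℕ∞) ∧ (Prec u s y x ↔ Prec u s y x') ∧
      (Prec u s x y ↔ Prec u s x' y) := by
  obtain ⟨hfi', hxy, hx'y, hiff⟩ := firstIdx_transfer hside hj hjk
  obtain ⟨hsg1, hsg2⟩ := sign_iff (s := s) hs1 hxy hx'y hiff
  refine ⟨hfi', ?_, ?_⟩
  · rw [prec_iff_of_firstIdx (hj ▸ firstIdx_comm u y x),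
      prec_iff_of_firstIdx (hfi' ▸ firstIdx_comm u y x')]
    exact hsg2
  · rw [prec_iff_of_firstIdx hj, prec_iff_of_firstIdx hfi']
    exact hsg1

end Transfer

section Trans
variable {u s : ℕ → ℝ}

lemma not_mem_gapInterval_of_side {x z t : ℝ} (h : x < t ↔ z < t) : t ∉ gapInterval x z := by
  rw [mem_gapInterval]
  intro hm
  by_cases hx : x < t
  · exact absurd (hm.mp hx) (not_le.mpr (h.mp hx))
  · have hz : ¬ z < t := fun hz => hx (h.mpr hz)
    exact hx (hm.mpr (not_lt.mp hz))

lemma prec_trans (hs : ∀ j, 1 ≤ j → s j = 1 ∨ s j = -1) {x y z : ℝ}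
    {j1 j2 : ℕ} (hj1 : firstIdx u x y = (j1 : ℕ∞)) (hg1 : (y - x) * s j1 > 0)
    (hj2 : firstIdx u y z = (j2 : ℕ∞)) (hg2 : (z - y) * s j2 > 0) :
    firstIdx u x z = ((min j1 j2 : ℕ) : ℕ∞) ∧ (z - x) * s (min j1 j2) > 0 := by
  obtain ⟨h11, h12, h13⟩ := firstIdx_eq_coe_iff.mp hj1
  obtain ⟨h21, h22, h23⟩ := firstIdx_eq_coe_iff.mp hj2
  rcases lt_trichotomy j1 j2 with hlt | heq | hgt
  · -- j1 < j2 : first index of (x,z) is j1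
    rw [min_eq_left hlt.le]
    set t := u j1 with ht
    have hside : y < t ↔ z < t := side_iff_of_not_mem (h23 j1 h11 hlt)
    have hmxy : x < t ↔ t ≤ y := mem_gapInterval.mp h12
    have hmem : t ∈ gapInterval x z := by
      rw [mem_gapInterval]
      constructor
      · intro hx
        exact not_lt.mp (fun hz => absurd (hside.mpr hz) (not_lt.mpr (hmxy.mp hx)))
      · intro htz
        by_contra hx
        have hy : ¬ t ≤ y := fun h => hx (hmxy.mpr h)
        exact absurd htz (not_le.mpr (hside.mp (not_le.mp hy)))
    have hfi : firstIdx u x z = (j1 : ℕ∞) :=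
      firstIdx_eq_coe_iff.mpr ⟨h11, hmem, fun i hi1 hilt hm =>
        not_mem_gapInterval_of_side
          ((side_iff_of_not_mem (h13 i hi1 hilt)).trans
            (side_iff_of_not_mem (h23 i hi1 (hilt.trans hlt)))) hm⟩
    refine ⟨hfi, ?_⟩
    rcases hs j1 h11 with h | h <;> rw [h] at hg1 ⊢
    · have hxy : x < y := by nlinarith
      have hxt : x < t := by
        by_contra hxt
        have : ¬ t ≤ y := fun hh => hxt (hmxy.mpr hh)
        push_neg at hxt this
        linarith
      have hty : t ≤ y := hmxy.mp hxt
      have htz : t ≤ z := not_lt.mp (fun hz => absurd (hside.mpr hz) (not_lt.mpr hty))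
      nlinarith
    · have hyx : y < x := by nlinarith
      have hxt : ¬ x < t := by
        intro hxt
        have := hmxy.mp hxt
        linarith
      have hyt : y < t := by
        by_contra hyt
        exact hxt (hmxy.mpr (not_lt.mp hyt))
      have hzt : z < t := hside.mp hyt
      have htx : t ≤ x := not_lt.mp hxt
      nlinarith
  · -- j1 = j2 : impossible given the signs
    exfalso
    subst heq
    have hmxy : x < u j1 ↔ u j1 ≤ y := mem_gapInterval.mp h12
    have hmyz : y < u j1 ↔ u j1 ≤ z := mem_gapInterval.mp h22
    rcases hs j1 h11 with h | h <;> rw [h] at hg1 hg2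
    · -- s = 1 : x < y < z, t ∈ (x,y] and t ∈ (y,z] impossible
      have hxy : x < y := by nlinarith
      have hyz : y < z := by nlinarith
      have hxt : x < u j1 := by
        by_contra hxt
        have : ¬ u j1 ≤ y := fun hh => hxt (hmxy.mpr hh)
        push_neg at hxt this
        linarith
      have hty : u j1 ≤ y := hmxy.mp hxt
      have hyt : ¬ y < u j1 := not_lt.mpr hty
      have : ¬ u j1 ≤ z := fun hh => hyt (hmyz.mpr hh)
      push_neg at this
      linarith
    · have hyx : y < x := by nlinarith
      have hzy : z < y := by nlinarith
      have hyt : y < u j1 := by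
        by_contra hyt
        have := hmxy.mpr (not_lt.mp hyt)
        push_neg at hyt
        linarith
      have := hmyz.mp hyt
      linarith
  · -- j2 < j1
    rw [min_eq_right hgt.le]
    set t := u j2 with ht
    have hside : x < t ↔ y < t := side_iff_of_not_mem (h13 j2 h21 hgt)
    have hmyz : y < t ↔ t ≤ z := mem_gapInterval.mp h22
    have hmem : t ∈ gapInterval x z := by
      rw [mem_gapInterval]
      exact ⟨fun hx => hmyz.mp (hside.mp hx), fun hz => hside.mpr (hmyz.mpr hz)⟩
    have hfi : firstIdx u x z = (j2 : ℕ∞) :=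
      firstIdx_eq_coe_iff.mpr ⟨h21, hmem, fun i hi1 hilt hm =>
        not_mem_gapInterval_of_side
          ((side_iff_of_not_mem (h13 i hi1 (hilt.trans hgt))).trans
            (side_iff_of_not_mem (h23 i hi1 hilt))) hm⟩
    refine ⟨hfi, ?_⟩
    rcases hs j2 h21 with h | h <;> rw [h] at hg2 ⊢
    · have hyz : y < z := by nlinarith
      have hyt : y < t := by
        by_contra hyt
        have : ¬ t ≤ z := fun hh => hyt (hmyz.mpr hh)
        push_neg at hyt this
        linarith
      have htz : t ≤ z := hmyz.mp hyt
      have hxt : x < t := hside.mpr hyt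
      nlinarith
    · have hzy : z < y := by nlinarith
      have hty : ¬ y < t := by
        intro hyt
        have := hmyz.mp hyt
        linarith
      have hzt : z < t := by
        by_contra hzt
        exact hty (hmyz.mpr (not_lt.mp hzt))
      have htx : t ≤ x := not_lt.mp (fun hx => hty (hside.mp hx))
      nlinarith

end Trans

section Mesh
variable {u : ℕ → ℝ}

/-- The empirical CDF. -/
noncomputable def empF (u : ℕ → ℝ) (n : ℕ) (z : ℝ) : ℝ :=
  (1 / (n : ℝ)) * ∑ j ∈ Finset.Icc 1 n, (if u j ≤ z then (1:ℝ) else 0)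

/-- The discrepancy. -/
noncomputable def Dfun (u : ℕ → ℝ) (n : ℕ) : ℝ :=
  ⨆ x : Set.Icc (0:ℝ) 1, |(x : ℝ) - empF u n (x : ℝ)|

lemma empF_nonneg (n : ℕ) (z : ℝ) : 0 ≤ empF u n z := by
  apply mul_nonneg
  · positivity
  · apply Finset.sum_nonneg; intro j _; positivity

lemma empF_le_one (n : ℕ) (z : ℝ) : empF u n z ≤ 1 := by
  rcases Nat.eq_zero_or_pos n with rfl | hn
  · simp [empF]
  · have h1 : ∑ j ∈ Finset.Icc 1 n, (if u j ≤ z then (1:ℝ) else 0) ≤ n := by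
      calc ∑ j ∈ Finset.Icc 1 n, (if u j ≤ z then (1:ℝ) else 0)
          ≤ ∑ j ∈ Finset.Icc 1 n, (1:ℝ) := by
            apply Finset.sum_le_sum; intro j _; split <;> norm_num
        _ = n := by simp [Nat.card_Icc]
    have hn' : (0:ℝ) < n := by exact_mod_cast hn
    rw [empF, div_mul_eq_mul_div, one_mul, div_le_one hn']
    exact h1

lemma abs_sub_empF_le (n : ℕ) {z : ℝ} (hz : z ∈ Set.Icc (0:ℝ) 1) :
    |z - empF u n z| ≤ 2 := by
  rw [abs_sub_le_iff]
  constructor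
  · have := empF_nonneg (u := u) n z; linarith [hz.2]
  · have := empF_le_one (u := u) n z; linarith [hz.1]

lemma bddAbove_Drange (n : ℕ) :
    BddAbove (Set.range fun x : Set.Icc (0:ℝ) 1 => |(x:ℝ) - empF u n (x:ℝ)|) := by
  refine ⟨2, ?_⟩
  rintro r ⟨x, rfl⟩
  exact abs_sub_empF_le n x.2

lemma le_Dfun (n : ℕ) {z : ℝ} (hz : z ∈ Set.Icc (0:ℝ) 1) :
    |z - empF u n z| ≤ Dfun u n :=
  le_ciSup (bddAbove_Drange n) (⟨z, hz⟩ : Set.Icc (0:ℝ) 1)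

lemma Dfun_nonneg (n : ℕ) : 0 ≤ Dfun u n :=
  le_trans (abs_nonneg _) (le_Dfun n (by norm_num : (0:ℝ) ∈ Set.Icc (0:ℝ) 1))

/-- Mesh lemma: an interval inside `[0,1]` containing no `u_j`, `1 ≤ j ≤ n`,
has length at most `2 * Dfun u n`. -/
lemma gap_le_two_Dfun (n : ℕ) {a b : ℝ} (ha : a ∈ Set.Icc (0:ℝ) 1)
    (hb : b ∈ Set.Icc (0:ℝ) 1) (hab : a ≤ b)
    (h : ∀ j, 1 ≤ j → j ≤ n → u j ∉ Set.Ioo a b) : b - a ≤ 2 * Dfun u n := by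
  have key : ∀ z, a ≤ z → z < b → z - a ≤ 2 * Dfun u n := by
    intro z haz hzb
    have hF : empF u n z = empF u n a := by
      unfold empF
      congr 1
      apply Finset.sum_congr rfl
      intro j hj
      rw [Finset.mem_Icc] at hj
      by_cases hja : u j ≤ a
      · rw [if_pos hja, if_pos (hja.trans haz)]
      · push_neg at hja
        have : ¬ u j ≤ z := by
          intro hjz
          exact h j hj.1 hj.2 ⟨hja, lt_of_le_of_lt hjz hzb⟩
        rw [if_neg this, if_neg (not_le.mpr hja)]
    have hz1 : z ∈ Set.Icc (0:ℝ) 1 := ⟨le_trans ha.1 haz, le_of_lt (lt_of_lt_of_le hzb hb.2)⟩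
    have h1 := le_Dfun (u := u) n hz1
    have h2 := le_Dfun (u := u) n ha
    rw [hF] at h1
    rw [abs_le] at h1 h2
    linarith [h1.1, h1.2, h2.1, h2.2]
  by_contra hc
  push_neg at hc
  have hab' : a + 2 * Dfun u n < b := by linarith
  obtain ⟨c, hc1, hc2⟩ := exists_between hab'
  have hac : a ≤ c := le_trans (by linarith [Dfun_nonneg (u := u) n]) hc1.le
  have := key c hac hc2
  linarith

end Mesh

section Density
variable {u s : ℕ → ℝ}

lemma dense_of_GC (hGC : Tendsto (fun n => Dfun u n) atTop (nhds 0))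
    {a b : ℝ} (ha : 0 ≤ a) (hb : b ≤ 1) (hab : a < b) :
    ∃ j, 1 ≤ j ∧ u j ∈ Set.Ioo a b := by
  have hpos : (0:ℝ) < (b - a) / 2 := by linarith
  obtain ⟨n, hn⟩ := (hGC.eventually_lt_const hpos).exists
  by_contra hc
  push_neg at hc
  have : b - a ≤ 2 * Dfun u n := by
    apply gap_le_two_Dfun n ⟨ha, by linarith⟩ ⟨by linarith, hb⟩ hab.le
    intro j hj1 _ hmem
    exact hc j hj1 hmem
  linarith

lemma comparable_of_GC (hs : ∀ j, 1 ≤ j → s j = 1 ∨ s j = -1)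
    (hGC : Tendsto (fun n => Dfun u n) atTop (nhds 0))
    {x y : ℝ} (hx : x ∈ Set.Icc (0:ℝ) 1) (hy : y ∈ Set.Icc (0:ℝ) 1) (hxy : x ≠ y) :
    Prec u s x y ∨ Prec u s y x := by
  obtain ⟨j, hj1, hj2⟩ := dense_of_GC hGC (le_min hx.1 hy.1) (max_le hx.2 hy.2)
    (by rcases hxy.lt_or_gt with h | h <;> simp [min_eq_left, max_eq_right, h.le, h] <;> linarith)
  have hmem : u j ∈ gapInterval x y := ⟨hj2.1, hj2.2.le⟩
  obtain ⟨j0, hfi, hj01, -, -⟩ := firstIdx_spec ⟨j, hj1, hmem⟩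
  rcases hxy.lt_or_gt with hlt | hlt <;> rcases hs j0 hj01 with h | h
  · exact Or.inl ⟨j0, hfi, by rw [h]; linarith⟩
  · exact Or.inr ⟨j0, by rw [firstIdx_comm]; exact hfi, by rw [h]; nlinarith⟩
  · exact Or.inr ⟨j0, by rw [firstIdx_comm]; exact hfi, by rw [h]; linarith⟩
  · exact Or.inl ⟨j0, hfi, by rw [h]; nlinarith⟩

end Density

section Meas
variable (u s : ℕ → ℝ)

lemma measurableSet_mem_gap (i : ℕ) :
    MeasurableSet {p : ℝ × ℝ | u i ∈ gapInterval p.2 p.1} := by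
  have : {p : ℝ × ℝ | u i ∈ gapInterval p.2 p.1} =
      ({p : ℝ × ℝ | p.2 < u i} ∩ {p : ℝ × ℝ | u i ≤ p.1}) ∪
      ({p : ℝ × ℝ | p.2 < u i}ᶜ ∩ {p : ℝ × ℝ | u i ≤ p.1}ᶜ) := by
    ext p
    rw [Set.mem_setOf_eq, mem_gapInterval]
    by_cases h1 : p.2 < u i <;> by_cases h2 : u i ≤ p.1 <;>
      simp [h1, h2]
  rw [this]
  have hA : MeasurableSet {p : ℝ × ℝ | p.2 < u i} :=
    measurableSet_lt measurable_snd measurable_const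
  have hB : MeasurableSet {p : ℝ × ℝ | u i ≤ p.1} :=
    measurableSet_le measurable_const measurable_fst
  exact (hA.inter hB).union (hA.compl.inter hB.compl)

lemma measurableSet_firstIdx_eq (j : ℕ) :
    MeasurableSet {p : ℝ × ℝ | firstIdx u p.2 p.1 = (j : ℕ∞)} := by
  have heq : {p : ℝ × ℝ | firstIdx u p.2 p.1 = (j : ℕ∞)} =
      {p : ℝ × ℝ | 1 ≤ j} ∩ ({p : ℝ × ℝ | u j ∈ gapInterval p.2 p.1} ∩
        ⋂ (i : ℕ), ⋂ (_ : 1 ≤ i), ⋂ (_ : i < j), {p : ℝ × ℝ | u i ∈ gapInterval p.2 p.1}ᶜ) := by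
    ext p
    simp only [Set.mem_setOf_eq, Set.mem_inter_iff, Set.mem_iInter, Set.mem_compl_iff,
      firstIdx_eq_coe_iff]
  rw [heq]
  refine (MeasurableSet.const _).inter ((measurableSet_mem_gap u j).inter ?_)
  exact MeasurableSet.iInter fun i => MeasurableSet.iInter fun _ =>
    MeasurableSet.iInter fun _ => (measurableSet_mem_gap u i).compl

lemma measurableSet_firstIdx_le (k : ℕ) :
    MeasurableSet {p : ℝ × ℝ | firstIdx u p.1 p.2 ≤ (k : ℕ∞)} := by
  have heq : {p : ℝ × ℝ | firstIdx u p.1 p.2 ≤ (k : ℕ∞)} =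
      ⋃ (j : ℕ), ⋃ (_ : 1 ≤ j), ⋃ (_ : j ≤ k), {p : ℝ × ℝ | u j ∈ gapInterval p.2 p.1} := by
    ext p
    simp only [Set.mem_setOf_eq, Set.mem_iUnion, firstIdx_le_iff, gapInterval_comm p.1 p.2]
    tauto
  rw [heq]
  exact MeasurableSet.iUnion fun j => MeasurableSet.iUnion fun _ =>
    MeasurableSet.iUnion fun _ => measurableSet_mem_gap u j

lemma measurableSet_Zfull :
    MeasurableSet {p : ℝ × ℝ | p.2 ∈ Set.Icc (0:ℝ) 1 ∧ Prec u s p.2 p.1} := by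
  have heq : {p : ℝ × ℝ | p.2 ∈ Set.Icc (0:ℝ) 1 ∧ Prec u s p.2 p.1} =
      (Prod.snd ⁻¹' Set.Icc (0:ℝ) 1) ∩
      ⋃ (j : ℕ), ({p : ℝ × ℝ | firstIdx u p.2 p.1 = (j : ℕ∞)} ∩
        {p : ℝ × ℝ | (p.1 - p.2) * s j > 0}) := by
    ext p
    simp only [Set.mem_setOf_eq, Set.mem_inter_iff, Set.mem_preimage, Set.mem_iUnion, Prec]
  rw [heq]
  refine (measurableSet_Icc.preimage measurable_snd).inter (MeasurableSet.iUnion fun j => ?_)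
  refine (measurableSet_firstIdx_eq u j).inter ?_
  exact measurableSet_lt measurable_const ((measurable_fst.sub measurable_snd).mul_const _)

lemma measurableSet_ZK (k : ℕ) :
    MeasurableSet {p : ℝ × ℝ | p.2 ∈ Set.Icc (0:ℝ) 1 ∧ Prec u s p.2 p.1 ∧
      firstIdx u p.1 p.2 ≤ (k : ℕ∞)} := by
  have heq : {p : ℝ × ℝ | p.2 ∈ Set.Icc (0:ℝ) 1 ∧ Prec u s p.2 p.1 ∧
      firstIdx u p.1 p.2 ≤ (k : ℕ∞)} =
      {p : ℝ × ℝ | p.2 ∈ Set.Icc (0:ℝ) 1 ∧ Prec u s p.2 p.1} ∩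
      {p : ℝ × ℝ | firstIdx u p.1 p.2 ≤ (k : ℕ∞)} := by
    ext p; simp only [Set.mem_setOf_eq, Set.mem_inter_iff]; tauto
  rw [heq]
  exact (measurableSet_Zfull u s).inter (measurableSet_firstIdx_le u k)

lemma measurableSet_phiSet (x : ℝ) :
    MeasurableSet {y : ℝ | y ∈ Set.Icc (0:ℝ) 1 ∧ Prec u s y x} :=
  (measurableSet_Zfull u s).preimage measurable_prodMk_left

lemma measurableSet_phiKSet (k : ℕ) (x : ℝ) :
    MeasurableSet {y : ℝ | y ∈ Set.Icc (0:ℝ) 1 ∧ Prec u s y x ∧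
      firstIdx u x y ≤ (k : ℕ∞)} :=
  (measurableSet_ZK u s k).preimage measurable_prodMk_left

lemma measurable_phi : Measurable (phi u s) := by
  have : phi u s = fun x =>
      (volume (Prod.mk x ⁻¹' {p : ℝ × ℝ | p.2 ∈ Set.Icc (0:ℝ) 1 ∧ Prec u s p.2 p.1})).toReal :=
    rfl
  rw [this]
  exact (measurable_measure_prodMk_left (measurableSet_Zfull u s)).ennreal_toReal

end Meas

section AB
variable (u : ℕ → ℝ)

noncomputable def aK (k : ℕ) (x : ℝ) : ℝ :=
  (insert (0:ℝ) (((Finset.Icc 1 k).filter (fun j => u j ≤ x)).image u)).max'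
    (Finset.insert_nonempty _ _)

noncomputable def bK (k : ℕ) (x : ℝ) : ℝ :=
  (insert (1:ℝ) (((Finset.Icc 1 k).filter (fun j => x < u j)).image u)).min'
    (Finset.insert_nonempty _ _)

variable {u} {k : ℕ} {x y : ℝ}

lemma aK_cases : aK u k x = 0 ∨ ∃ j, 1 ≤ j ∧ j ≤ k ∧ u j ≤ x ∧ u j = aK u k x := by
  rcases Finset.mem_insert.mp (Finset.max'_mem _ (Finset.insert_nonempty (0:ℝ)
      (((Finset.Icc 1 k).filter (fun j => u j ≤ x)).image u))) with h0 | hmem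
  · exact Or.inl h0
  · obtain ⟨j, hj, hju⟩ := Finset.mem_image.mp hmem
    obtain ⟨hjIcc, hjle⟩ := Finset.mem_filter.mp hj
    obtain ⟨hj1, hj2⟩ := Finset.mem_Icc.mp hjIcc
    exact Or.inr ⟨j, hj1, hj2, hjle, hju⟩

lemma bK_cases : bK u k x = 1 ∨ ∃ j, 1 ≤ j ∧ j ≤ k ∧ x < u j ∧ u j = bK u k x := by
  rcases Finset.mem_insert.mp (Finset.min'_mem _ (Finset.insert_nonempty (1:ℝ)
      (((Finset.Icc 1 k).filter (fun j => x < u j)).image u))) with h0 | hmem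
  · exact Or.inl h0
  · obtain ⟨j, hj, hju⟩ := Finset.mem_image.mp hmem
    obtain ⟨hjIcc, hjle⟩ := Finset.mem_filter.mp hj
    obtain ⟨hj1, hj2⟩ := Finset.mem_Icc.mp hjIcc
    exact Or.inr ⟨j, hj1, hj2, hjle, hju⟩

lemma aK_le (hx : x ∈ Set.Icc (0:ℝ) 1) : aK u k x ≤ x := by
  apply Finset.max'_le
  intro y hy
  rcases Finset.mem_insert.mp hy with rfl | hy
  · exact hx.1
  · obtain ⟨j, hj, rfl⟩ := Finset.mem_image.mp hy
    exact (Finset.mem_filter.mp hj).2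

lemma zero_le_aK : 0 ≤ aK u k x := Finset.le_max' _ 0 (Finset.mem_insert_self _ _)

lemma le_bK (hx : x ∈ Set.Icc (0:ℝ) 1) : x ≤ bK u k x := by
  apply Finset.le_min'
  intro y hy
  rcases Finset.mem_insert.mp hy with rfl | hy
  · exact hx.2
  · obtain ⟨j, hj, rfl⟩ := Finset.mem_image.mp hy
    exact ((Finset.mem_filter.mp hj).2).le

lemma bK_le_one : bK u k x ≤ 1 := Finset.min'_le _ 1 (Finset.mem_insert_self _ _)

lemma not_mem_Ioo_aK_bK {j : ℕ} (h1 : 1 ≤ j) (h2 : j ≤ k) :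
    u j ∉ Set.Ioo (aK u k x) (bK u k x) := by
  intro hmem
  by_cases hle : u j ≤ x
  · have : u j ≤ aK u k x := Finset.le_max' _ _ (Finset.mem_insert.mpr (Or.inr
      (Finset.mem_image.mpr ⟨j, Finset.mem_filter.mpr ⟨Finset.mem_Icc.mpr ⟨h1, h2⟩, hle⟩, rfl⟩)))
    exact absurd hmem.1 (not_lt.mpr this)
  · push_neg at hle
    have : bK u k x ≤ u j := Finset.min'_le _ _ (Finset.mem_insert.mpr (Or.inr
      (Finset.mem_image.mpr ⟨j, Finset.mem_filter.mpr ⟨Finset.mem_Icc.mpr ⟨h1, h2⟩, hle⟩, rfl⟩)))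
    exact absurd hmem.2 (not_lt.mpr this)

lemma mem_Icc_aK_bK (hy : y ∈ Set.Icc (0:ℝ) 1)
    (h : ∀ j, 1 ≤ j → j ≤ k → u j ∉ gapInterval x y) :
    y ∈ Set.Icc (aK u k x) (bK u k x) := by
  constructor
  · by_contra hc
    push_neg at hc
    rcases aK_cases (u := u) (k := k) (x := x) with h0 | ⟨j, hj1, hj2, hjle, hju⟩
    · rw [h0] at hc
      exact absurd hy.1 (not_le.mpr hc)
    · apply h j hj1 hj2
      rw [mem_gapInterval]
      exact iff_of_false (not_lt.mpr hjle) (not_le.mpr (hju ▸ hc))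
  · by_contra hc
    push_neg at hc
    rcases bK_cases (u := u) (k := k) (x := x) with h0 | ⟨j, hj1, hj2, hjlt, hju⟩
    · rw [h0] at hc
      exact absurd hy.2 (not_le.mpr hc)
    · apply h j hj1 hj2
      rw [mem_gapInterval]
      exact iff_of_true hjlt (le_of_lt (hju ▸ hc))

lemma bK_sub_aK_le (hx : x ∈ Set.Icc (0:ℝ) 1) :
    bK u k x - aK u k x ≤ 2 * Dfun u k := by
  apply gap_le_two_Dfun k ⟨zero_le_aK, (aK_le hx).trans hx.2⟩
    ⟨hx.1.trans (le_bK hx), bK_le_one⟩ ((aK_le hx).trans (le_bK hx))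
  intro j h1 h2
  exact not_mem_Ioo_aK_bK h1 h2

end AB

section KeyBound
variable {u s : ℕ → ℝ} {k : ℕ} {x : ℝ}

lemma phiK_le_phi (k : ℕ) (x : ℝ) : phiK u s k x ≤ phi u s x := by
  unfold phiK phi
  have hsub : {y : ℝ | y ∈ Set.Icc (0:ℝ) 1 ∧ Prec u s y x ∧ firstIdx u x y ≤ (k : ℕ∞)} ⊆
      {y : ℝ | y ∈ Set.Icc (0:ℝ) 1 ∧ Prec u s y x} := fun y hy => ⟨hy.1, hy.2.1⟩
  have h1 : volume {y : ℝ | y ∈ Set.Icc (0:ℝ) 1 ∧ Prec u s y x} ≤ volume (Set.Icc (0:ℝ) 1) :=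
    measure_mono (fun y hy => hy.1)
  exact ENNReal.toReal_mono (by rw [Real.volume_Icc] at h1; exact (h1.trans_lt (by simp)).ne)
    (measure_mono hsub)

lemma phi_le_one (x : ℝ) : phi u s x ≤ 1 := by
  unfold phi
  have h1 : volume {y : ℝ | y ∈ Set.Icc (0:ℝ) 1 ∧ Prec u s y x} ≤ volume (Set.Icc (0:ℝ) 1) :=
    measure_mono (fun y hy => hy.1)
  calc (volume {y : ℝ | y ∈ Set.Icc (0:ℝ) 1 ∧ Prec u s y x}).toReal
      ≤ (volume (Set.Icc (0:ℝ) 1)).toReal :=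
        ENNReal.toReal_mono (by rw [Real.volume_Icc]; simp) h1
    _ = 1 := by rw [Real.volume_Icc]; norm_num

lemma phi_nonneg (x : ℝ) : 0 ≤ phi u s x := ENNReal.toReal_nonneg

lemma phi_sub_phiK_le (hx : x ∈ Set.Icc (0:ℝ) 1) :
    phi u s x - phiK u s k x ≤ 2 * Dfun u k := by
  set A := {y : ℝ | y ∈ Set.Icc (0:ℝ) 1 ∧ Prec u s y x} with hA
  set Ak := {y : ℝ | y ∈ Set.Icc (0:ℝ) 1 ∧ Prec u s y x ∧ firstIdx u x y ≤ (k : ℕ∞)} with hAk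
  have hsub : Ak ⊆ A := fun y hy => ⟨hy.1, hy.2.1⟩
  have hAfin : volume A ≠ ⊤ := by
    have h1 : volume A ≤ volume (Set.Icc (0:ℝ) 1) := measure_mono (fun y hy => hy.1)
    rw [Real.volume_Icc] at h1
    exact (h1.trans_lt (by simp)).ne
  have hdiff : volume (A \ Ak) = volume A - volume Ak :=
    measure_diff hsub (measurableSet_phiKSet u s k x).nullMeasurableSet
      ((measure_mono hsub).trans_lt (lt_top_iff_ne_top.mpr hAfin)).ne
  have hbound : volume (A \ Ak) ≤ ENNReal.ofReal (2 * Dfun u k) := by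
    have hsubI : A \ Ak ⊆ Set.Icc (aK u k x) (bK u k x) := by
      rintro y ⟨⟨hyI, hyP⟩, hyn⟩
      apply mem_Icc_aK_bK hyI
      intro j h1 h2 hmem
      exact hyn ⟨hyI, hyP, firstIdx_le_iff.mpr ⟨j, h1, h2, hmem⟩⟩
    calc volume (A \ Ak) ≤ volume (Set.Icc (aK u k x) (bK u k x)) := measure_mono hsubI
      _ = ENNReal.ofReal (bK u k x - aK u k x) := Real.volume_Icc
      _ ≤ ENNReal.ofReal (2 * Dfun u k) := ENNReal.ofReal_le_ofReal (bK_sub_aK_le hx)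
  have heq : phi u s x - phiK u s k x = (volume (A \ Ak)).toReal := by
    rw [hdiff, ENNReal.toReal_sub_of_le (measure_mono hsub) hAfin]
    rfl
  rw [heq]
  calc (volume (A \ Ak)).toReal ≤ (ENNReal.ofReal (2 * Dfun u k)).toReal :=
      ENNReal.toReal_mono ENNReal.ofReal_ne_top hbound
    _ = 2 * Dfun u k := ENNReal.toReal_ofReal (by have := Dfun_nonneg (u := u) k; linarith)

end KeyBound

section Combinatorial
variable {α : Type*} [DecidableEq α]

lemma exists_rel_greatest {r : α → α → Prop} (F : Finset α) (hne : F.Nonempty)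
    (htot : ∀ a ∈ F, ∀ b ∈ F, a ≠ b → r a b ∨ r b a)
    (htr : ∀ a ∈ F, ∀ b ∈ F, ∀ c ∈ F, r a b → r b c → r a c) :
    ∃ m ∈ F, ∀ b ∈ F, b ≠ m → r b m := by
  classical
  obtain ⟨n, hn⟩ : ∃ n, F.card = n := ⟨_, rfl⟩
  induction n generalizing F with
  | zero => exact absurd (Finset.card_eq_zero.mp hn) (Finset.nonempty_iff_ne_empty.mp hne)
  | succ n ih =>
    obtain ⟨a, ha⟩ := hne
    set G := F.erase a with hG
    by_cases hGne : G.Nonempty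
    · have hGcard : G.card = n := by
        rw [hG, Finset.card_erase_of_mem ha, hn]; rfl
      obtain ⟨m', hm'G, hm'⟩ := ih G hGne
        (fun x hx y hy => htot x (Finset.erase_subset _ _ hx) y (Finset.erase_subset _ _ hy))
        (fun x hx y hy z hz => htr x (Finset.erase_subset _ _ hx) y (Finset.erase_subset _ _ hy)
          z (Finset.erase_subset _ _ hz)) hGcard
      have hm'F : m' ∈ F := Finset.erase_subset _ _ hm'G
      have hne' : a ≠ m' := fun h => (Finset.ne_of_mem_erase hm'G) h.symm
      rcases htot a ha m' hm'F hne' with hr | hr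
      · refine ⟨m', hm'F, fun b hb hbne => ?_⟩
        by_cases hba : b = a
        · rw [hba]; exact hr
        · exact hm' b (Finset.mem_erase.mpr ⟨hba, hb⟩) hbne
      · refine ⟨a, ha, fun b hb hbne => ?_⟩
        by_cases hbm : b = m'
        · rw [hbm]; exact hr
        · exact htr b hb m' hm'F a ha (hm' b (Finset.mem_erase.mpr ⟨hbne, hb⟩) hbm) hr
    · refine ⟨a, ha, fun b hb hbne => ?_⟩
      exact absurd (Finset.mem_erase.mpr ⟨hbne, hb⟩) (fun h => hGne ⟨b, h⟩)

variable {r : α → α → Prop} [DecidableRel r]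

lemma sum_filter_csum_le (F : Finset α)
    (htot : ∀ a ∈ F, ∀ b ∈ F, a ≠ b → r a b ∨ r b a)
    (htr : ∀ a ∈ F, ∀ b ∈ F, ∀ c ∈ F, r a b → r b c → r a c)
    (hirr : ∀ a ∈ F, ¬ r a a)
    (w : α → ℝ) (hw : ∀ a ∈ F, 0 ≤ w a) (M : ℝ) (hM : 0 ≤ M) (hwM : ∀ a ∈ F, w a ≤ M)
    (t : ℝ) (ht : 0 ≤ t) :
    ∑ a ∈ F.filter (fun a => (∑ b ∈ F.filter (fun b => r b a), w b) ≤ t), w a ≤ t + M := by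
  classical
  set c : α → ℝ := fun a => ∑ b ∈ F.filter (fun b => r b a), w b with hc
  set F' := F.filter (fun a => c a ≤ t) with hF'
  by_cases hne : F'.Nonempty
  · obtain ⟨m, hmF', hm⟩ := exists_rel_greatest F' hne
      (fun x hx y hy => htot x (Finset.mem_filter.mp hx).1 y (Finset.mem_filter.mp hy).1)
      (fun x hx y hy z hz => htr x (Finset.mem_filter.mp hx).1 y (Finset.mem_filter.mp hy).1
        z (Finset.mem_filter.mp hz).1)
    have hmF : m ∈ F := (Finset.mem_filter.mp hmF').1
    have hsub : F' ⊆ insert m (F.filter (fun b => r b m)) := by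
      intro b hb
      by_cases hbm : b = m
      · rw [hbm]; exact Finset.mem_insert_self _ _
      · exact Finset.mem_insert.mpr (Or.inr (Finset.mem_filter.mpr
          ⟨(Finset.mem_filter.mp hb).1, hm b hb hbm⟩))
    have hmnot : m ∉ F.filter (fun b => r b m) := by
      intro h
      exact hirr m hmF (Finset.mem_filter.mp h).2
    calc ∑ a ∈ F', w a ≤ ∑ a ∈ insert m (F.filter (fun b => r b m)), w a := by
          apply Finset.sum_le_sum_of_subset_of_nonneg hsub
          intro i hi _
          rcases Finset.mem_insert.mp hi with rfl | hi
          · exact hw i hmF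
          · exact hw i (Finset.mem_filter.mp hi).1
      _ = w m + c m := by rw [Finset.sum_insert hmnot]
      _ ≤ M + t := add_le_add (hwM m hmF) (Finset.mem_filter.mp hmF').2
      _ = t + M := add_comm _ _
  · rw [Finset.not_nonempty_iff_eq_empty] at hne
    rw [hne, Finset.sum_empty]
    linarith

lemma le_sum_filter_csum (F : Finset α)
    (htot : ∀ a ∈ F, ∀ b ∈ F, a ≠ b → r a b ∨ r b a)
    (htr : ∀ a ∈ F, ∀ b ∈ F, ∀ c ∈ F, r a b → r b c → r a c)
    (hirr : ∀ a ∈ F, ¬ r a a)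
    (w : α → ℝ) (hw : ∀ a ∈ F, 0 ≤ w a)
    (t : ℝ) (ht : t ≤ ∑ a ∈ F, w a) :
    t ≤ ∑ a ∈ F.filter (fun a => (∑ b ∈ F.filter (fun b => r b a), w b) ≤ t), w a := by
  classical
  set c : α → ℝ := fun a => ∑ b ∈ F.filter (fun b => r b a), w b with hc
  set F' := F.filter (fun a => c a ≤ t) with hF'
  set Fc := F.filter (fun a => ¬ c a ≤ t) with hFc
  by_cases hne : Fc.Nonempty
  · obtain ⟨m, hmFc, hm⟩ := exists_rel_greatest (r := fun a b => r b a) Fc hne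
      (fun x hx y hy hne' => Or.symm (htot x (Finset.mem_filter.mp hx).1 y
        (Finset.mem_filter.mp hy).1 hne'))
      (fun x hx y hy z hz hxy hyz => htr z (Finset.mem_filter.mp hz).1 y
        (Finset.mem_filter.mp hy).1 x (Finset.mem_filter.mp hx).1 hyz hxy)
    -- hm : ∀ b ∈ Fc, b ≠ m → r m b
    have hmF : m ∈ F := (Finset.mem_filter.mp hmFc).1
    have hsub : F.filter (fun b => r b m) ⊆ F' := by
      intro b hb
      obtain ⟨hbF, hbr⟩ := Finset.mem_filter.mp hb
      rw [hF', Finset.mem_filter]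
      refine ⟨hbF, ?_⟩
      by_contra hbc
      have hbFc : b ∈ Fc := Finset.mem_filter.mpr ⟨hbF, hbc⟩
      have hbm : b ≠ m := by
        rintro rfl
        exact hirr b hbF hbr
      exact hirr m hmF (htr m hmF b hbF m hmF (hm b hbFc hbm) hbr)
    have hcm : t < c m := not_le.mp (Finset.mem_filter.mp hmFc).2
    calc t ≤ c m := hcm.le
      _ ≤ ∑ a ∈ F', w a := by
          apply Finset.sum_le_sum_of_subset_of_nonneg hsub
          intro i hi _
          exact hw i (Finset.mem_filter.mp hi).1
  · have : F' = F := by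
      rw [hF']
      apply Finset.filter_true_of_mem
      intro a haF
      by_contra hc'
      exact hne ⟨a, Finset.mem_filter.mpr ⟨haF, hc'⟩⟩
    rw [this]
    exact ht

end Combinatorial

section Gaps
variable (u s : ℕ → ℝ) (k : ℕ)

noncomputable def bnd : Finset ℝ := insert 0 (insert 1 ((Finset.Icc 1 k).image u))

noncomputable def nxt (b : ℝ) : ℝ :=
  if h : ((bnd u k).filter (fun c => b < c)).Nonempty
    then ((bnd u k).filter (fun c => b < c)).min' h else 1

noncomputable def midp (b : ℝ) : ℝ := (b + nxt u k b) / 2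

/-- The order relation on gaps, via midpoints. -/
def Rk (b' b : ℝ) : Prop :=
  Prec u s (midp u k b') (midp u k b) ∧ firstIdx u (midp u k b) (midp u k b') ≤ (k : ℕ∞)

noncomputable instance : DecidableRel (Rk u s k) := fun _ _ => Classical.propDecidable _

variable {u s k}
variable (hu : ∀ j, 1 ≤ j → u j ∈ Set.Ioo (0:ℝ) 1)

lemma zero_mem_bnd : (0:ℝ) ∈ bnd u k := Finset.mem_insert_self _ _
lemma one_mem_bnd : (1:ℝ) ∈ bnd u k :=
  Finset.mem_insert.mpr (Or.inr (Finset.mem_insert_self _ _))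

lemma bnd_cases {b : ℝ} (hb : b ∈ bnd u k) :
    b = 0 ∨ b = 1 ∨ ∃ j, 1 ≤ j ∧ j ≤ k ∧ u j = b := by
  rcases Finset.mem_insert.mp hb with rfl | hb
  · exact Or.inl rfl
  rcases Finset.mem_insert.mp hb with rfl | hb
  · exact Or.inr (Or.inl rfl)
  obtain ⟨j, hj, rfl⟩ := Finset.mem_image.mp hb
  obtain ⟨h1, h2⟩ := Finset.mem_Icc.mp hj
  exact Or.inr (Or.inr ⟨j, h1, h2, rfl⟩)

include hu in
lemma mem_bnd_Icc {b : ℝ} (hb : b ∈ bnd u k) : b ∈ Set.Icc (0:ℝ) 1 := by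
  rcases bnd_cases hb with rfl | rfl | ⟨j, h1, _, rfl⟩
  · exact ⟨le_rfl, zero_le_one⟩
  · exact ⟨zero_le_one, le_rfl⟩
  · exact ⟨(hu j h1).1.le, (hu j h1).2.le⟩

include hu in
lemma iota_lt_one {b : ℝ} (hb : b ∈ (bnd u k).erase 1) : b < 1 :=
  lt_of_le_of_ne (mem_bnd_Icc hu (Finset.mem_of_mem_erase hb)).2 (Finset.ne_of_mem_erase hb)

include hu in
lemma nxt_spec {b : ℝ} (hb : b ∈ (bnd u k).erase 1) :
    b < nxt u k b ∧ nxt u k b ∈ bnd u k ∧ ∀ c ∈ bnd u k, b < c → nxt u k b ≤ c := by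
  have hne : ((bnd u k).filter (fun c => b < c)).Nonempty :=
    ⟨1, Finset.mem_filter.mpr ⟨one_mem_bnd, iota_lt_one hu hb⟩⟩
  rw [nxt, dif_pos hne]
  have hmem := Finset.min'_mem _ hne
  obtain ⟨hmem1, hmem2⟩ := Finset.mem_filter.mp hmem
  exact ⟨hmem2, hmem1, fun c hc hbc => Finset.min'_le _ _ (Finset.mem_filter.mpr ⟨hc, hbc⟩)⟩

include hu in
lemma gap_no_u {b : ℝ} (hb : b ∈ (bnd u k).erase 1) :
    ∀ j, 1 ≤ j → j ≤ k → u j ∉ Set.Ioo b (nxt u k b) := by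
  intro j h1 h2 hmem
  have hjb : u j ∈ bnd u k := Finset.mem_insert.mpr (Or.inr (Finset.mem_insert.mpr
    (Or.inr (Finset.mem_image.mpr ⟨j, Finset.mem_Icc.mpr ⟨h1, h2⟩, rfl⟩))))
  exact absurd hmem.2 (not_lt.mpr ((nxt_spec hu hb).2.2 _ hjb hmem.1))

include hu in
lemma gap_subset_Icc {b : ℝ} (hb : b ∈ (bnd u k).erase 1) :
    Set.Ioo b (nxt u k b) ⊆ Set.Icc (0:ℝ) 1 := by
  intro y hy
  have h0 : (0:ℝ) ≤ b := (mem_bnd_Icc hu (Finset.mem_of_mem_erase hb)).1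
  have h1 : nxt u k b ≤ 1 := (mem_bnd_Icc hu (nxt_spec hu hb).2.1).2
  exact ⟨h0.trans hy.1.le, hy.2.le.trans h1⟩

include hu in
lemma gap_inter_bnd {b : ℝ} (hb : b ∈ (bnd u k).erase 1) {c : ℝ} (hc : c ∈ bnd u k) :
    c ∉ Set.Ioo b (nxt u k b) := by
  intro hmem
  exact absurd hmem.2 (not_lt.mpr ((nxt_spec hu hb).2.2 _ hc hmem.1))

include hu in
lemma gap_disjoint {b b' : ℝ} (hb : b ∈ (bnd u k).erase 1) (hb' : b' ∈ (bnd u k).erase 1)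
    (hne : b ≠ b') : Disjoint (Set.Ioo b (nxt u k b)) (Set.Ioo b' (nxt u k b')) := by
  rw [Set.disjoint_iff_inter_eq_empty, Set.eq_empty_iff_forall_notMem]
  rintro y ⟨hy1, hy2⟩
  rcases hne.lt_or_gt with hlt | hlt
  · have : nxt u k b ≤ b' := (nxt_spec hu hb).2.2 _ (Finset.mem_of_mem_erase hb') hlt
    have := hy1.2
    have := hy2.1
    linarith
  · have : nxt u k b' ≤ b := (nxt_spec hu hb').2.2 _ (Finset.mem_of_mem_erase hb) hlt
    have := hy1.1
    have := hy2.2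
    linarith

include hu in
lemma gap_cover {y : ℝ} (hy : y ∈ Set.Icc (0:ℝ) 1) (hyn : y ∉ bnd u k) :
    ∃ b ∈ (bnd u k).erase 1, y ∈ Set.Ioo b (nxt u k b) := by
  have hy0 : 0 < y := lt_of_le_of_ne hy.1 (fun h => hyn (h ▸ zero_mem_bnd))
  have hne : ((bnd u k).filter (fun c => c < y)).Nonempty :=
    ⟨0, Finset.mem_filter.mpr ⟨zero_mem_bnd, hy0⟩⟩
  set b := ((bnd u k).filter (fun c => c < y)).max' hne with hbdef
  have hbmem := Finset.max'_mem _ hne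
  obtain ⟨hbB, hby⟩ := Finset.mem_filter.mp hbmem
  have hbne1 : b ≠ 1 := fun h => absurd hy.2 (not_le.mpr (h ▸ hby))
  have hbi : b ∈ (bnd u k).erase 1 := Finset.mem_erase.mpr ⟨hbne1, hbB⟩
  refine ⟨b, hbi, hby, ?_⟩
  by_contra hc
  push_neg at hc
  have hlt : nxt u k b < y := lt_of_le_of_ne hc (fun h => hyn (h ▸ (nxt_spec hu hbi).2.1))
  have hmax : nxt u k b ≤ ((bnd u k).filter (fun c => c < y)).max' hne :=
    Finset.le_max' ((bnd u k).filter (fun c => c < y)) (nxt u k b)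
      (Finset.mem_filter.mpr ⟨(nxt_spec hu hbi).2.1, hlt⟩)
  rw [← hbdef] at hmax
  exact absurd (nxt_spec hu hbi).1 (not_lt.mpr hmax)

include hu in
lemma midp_mem {b : ℝ} (hb : b ∈ (bnd u k).erase 1) :
    midp u k b ∈ Set.Ioo b (nxt u k b) := by
  have := (nxt_spec hu hb).1
  constructor <;> (rw [midp]; linarith)

include hu in
lemma same_gap_no_sep {b x x' : ℝ} (hb : b ∈ (bnd u k).erase 1)
    (hx : x ∈ Set.Ioo b (nxt u k b)) (hx' : x' ∈ Set.Ioo b (nxt u k b)) :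
    ∀ i, 1 ≤ i → i ≤ k → u i ∉ gapInterval x x' := by
  intro i h1 h2 hmem
  apply gap_no_u hu hb i h1 h2
  rcases hmem with ⟨hm1, hm2⟩
  constructor
  · calc b < min x x' := lt_min hx.1 hx'.1
      _ < u i := hm1
  · calc u i ≤ max x x' := hm2
      _ < nxt u k b := max_lt hx.2 hx'.2

end Gaps

section GapOrder
variable {u s : ℕ → ℝ} {k : ℕ}
variable (hu : ∀ j, 1 ≤ j → u j ∈ Set.Ioo (0:ℝ) 1)
variable (hs : ∀ j, 1 ≤ j → s j = 1 ∨ s j = -1)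

include hs in
/-- Moving both arguments within unseparated regions preserves `firstIdx` and `Prec`. -/
lemma rel_transfer_pair {x x' y y' : ℝ} {j : ℕ}
    (hsidex : ∀ i, 1 ≤ i → i ≤ k → u i ∉ gapInterval x x')
    (hsidey : ∀ i, 1 ≤ i → i ≤ k → u i ∉ gapInterval y y')
    (hj : firstIdx u x y = (j : ℕ∞)) (hjk : j ≤ k) :
    firstIdx u x' y' = (j : ℕ∞) ∧ (Prec u s y x ↔ Prec u s y' x') := by
  have hj1 : 1 ≤ j := (firstIdx_eq_coe_iff.mp hj).1
  have hs1 := hs j hj1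
  obtain ⟨hfi1, hiff1, -⟩ := prec_transfer hs1 hsidex hj hjk
  have hj2 : firstIdx u y x' = (j : ℕ∞) := by rw [firstIdx_comm]; exact hfi1
  obtain ⟨hfi2, -, hiff2⟩ := prec_transfer hs1 hsidey hj2 hjk
  exact ⟨by rw [firstIdx_comm]; exact hfi2, hiff1.trans hiff2⟩

include hu hs in
lemma rel_iff_of_gaps {b b' x y : ℝ}
    (hb : b ∈ (bnd u k).erase 1) (hb' : b' ∈ (bnd u k).erase 1)
    (hx : x ∈ Set.Ioo b (nxt u k b)) (hy : y ∈ Set.Ioo b' (nxt u k b')) :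
    (Prec u s y x ∧ firstIdx u x y ≤ (k : ℕ∞)) ↔ Rk u s k b' b := by
  constructor
  · rintro ⟨hP, hle⟩
    obtain ⟨j, hj, hsgn⟩ := hP
    have hj' : firstIdx u x y = (j : ℕ∞) := by rw [firstIdx_comm]; exact hj
    have hjk : j ≤ k := by
      rw [hj'] at hle; exact_mod_cast hle
    obtain ⟨hfi, hiff⟩ := rel_transfer_pair hs
      (same_gap_no_sep hu hb hx (midp_mem hu hb))
      (same_gap_no_sep hu hb' hy (midp_mem hu hb')) hj' hjk
    refine ⟨hiff.mp ⟨j, hj, hsgn⟩, ?_⟩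
    rw [hfi]
    exact_mod_cast hjk
  · rintro ⟨hP, hle⟩
    obtain ⟨j, hj, hsgn⟩ := hP
    have hj' : firstIdx u (midp u k b) (midp u k b') = (j : ℕ∞) := by
      rw [firstIdx_comm]; exact hj
    have hjk : j ≤ k := by
      rw [hj'] at hle; exact_mod_cast hle
    obtain ⟨hfi, hiff⟩ := rel_transfer_pair hs
      (same_gap_no_sep hu hb (midp_mem hu hb) hx)
      (same_gap_no_sep hu hb' (midp_mem hu hb') hy) hj' hjk
    refine ⟨hiff.mp ⟨j, hj, hsgn⟩, ?_⟩
    rw [hfi]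
    exact_mod_cast hjk

lemma Rk_irrefl (b : ℝ) : ¬ Rk u s k b b := by
  rintro ⟨⟨j, _, hsgn⟩, -⟩
  simp at hsgn

include hu hs in
lemma Rk_total {b b' : ℝ} (hb : b ∈ (bnd u k).erase 1) (hb' : b' ∈ (bnd u k).erase 1)
    (hne : b ≠ b') : Rk u s k b b' ∨ Rk u s k b' b := by
  -- some boundary with index in [1,k] lies strictly between the midpoints
  have key : ∀ c c' : ℝ, c ∈ (bnd u k).erase 1 → c' ∈ (bnd u k).erase 1 → c < c' →
      ∃ j, 1 ≤ j ∧ j ≤ k ∧ u j ∈ gapInterval (midp u k c) (midp u k c') := by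
    intro c c' hc hc' hlt
    have hnc : nxt u k c ≤ c' := (nxt_spec hu hc).2.2 _ (Finset.mem_of_mem_erase hc') hlt
    have hmc := midp_mem hu hc
    have hmc' := midp_mem hu hc'
    have hlt1 : midp u k c < nxt u k c := hmc.2
    have hlt2 : c' < midp u k c' := hmc'.1
    have hn1 : nxt u k c ≠ 1 := by
      intro h1
      have : c' < 1 := iota_lt_one hu hc'
      linarith
    have hn0 : nxt u k c ≠ 0 := by
      have h0 : (0:ℝ) ≤ c := (mem_bnd_Icc hu (Finset.mem_of_mem_erase hc)).1
      have := (nxt_spec hu hc).1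
      intro h; linarith
    rcases bnd_cases (nxt_spec hu hc).2.1 with h | h | ⟨j, h1, h2, hj⟩
    · exact absurd h hn0
    · exact absurd h hn1
    refine ⟨j, h1, h2, ?_⟩
    rw [hj, mem_gapInterval]
    constructor
    · intro _; linarith
    · intro _; linarith
  rcases hne.lt_or_gt with hlt | hlt
  · obtain ⟨j, h1, h2, hmem⟩ := key b b' hb hb' hlt
    obtain ⟨j0, hfi, hj01, -, -⟩ := firstIdx_spec ⟨j, h1, hmem⟩
    have hj0k : j0 ≤ k := by
      have : firstIdx u (midp u k b) (midp u k b') ≤ (k : ℕ∞) :=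
        firstIdx_le_iff.mpr ⟨j, h1, h2, hmem⟩
      rw [hfi] at this; exact_mod_cast this
    have hmne : midp u k b ≠ midp u k b' := gapInterval_ne hmem
    have hfik : firstIdx u (midp u k b) (midp u k b') ≤ (k : ℕ∞) := by
      rw [hfi]; exact_mod_cast hj0k
    have hfik' : firstIdx u (midp u k b') (midp u k b) ≤ (k : ℕ∞) := by
      rw [firstIdx_comm]; exact hfik
    rcases hmne.lt_or_gt with hmlt | hmlt <;> rcases hs j0 hj01 with h | h
    · exact Or.inl ⟨⟨j0, hfi, by rw [h]; linarith⟩, hfik'⟩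
    · exact Or.inr ⟨⟨j0, by rw [firstIdx_comm]; exact hfi, by rw [h]; nlinarith⟩, hfik⟩
    · exact Or.inr ⟨⟨j0, by rw [firstIdx_comm]; exact hfi, by rw [h]; linarith⟩, hfik⟩
    · exact Or.inl ⟨⟨j0, hfi, by rw [h]; nlinarith⟩, hfik'⟩
  · obtain ⟨j, h1, h2, hmem⟩ := key b' b hb' hb hlt
    obtain ⟨j0, hfi, hj01, -, -⟩ := firstIdx_spec ⟨j, h1, hmem⟩
    have hj0k : j0 ≤ k := by
      have : firstIdx u (midp u k b') (midp u k b) ≤ (k : ℕ∞) :=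
        firstIdx_le_iff.mpr ⟨j, h1, h2, hmem⟩
      rw [hfi] at this; exact_mod_cast this
    have hmne : midp u k b' ≠ midp u k b := gapInterval_ne hmem
    have hfik : firstIdx u (midp u k b') (midp u k b) ≤ (k : ℕ∞) := by
      rw [hfi]; exact_mod_cast hj0k
    have hfik' : firstIdx u (midp u k b) (midp u k b') ≤ (k : ℕ∞) := by
      rw [firstIdx_comm]; exact hfik
    rcases hmne.lt_or_gt with hmlt | hmlt <;> rcases hs j0 hj01 with h | h
    · exact Or.inr ⟨⟨j0, hfi, by rw [h]; linarith⟩, hfik'⟩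
    · exact Or.inl ⟨⟨j0, by rw [firstIdx_comm]; exact hfi, by rw [h]; nlinarith⟩, hfik⟩
    · exact Or.inl ⟨⟨j0, by rw [firstIdx_comm]; exact hfi, by rw [h]; linarith⟩, hfik⟩
    · exact Or.inr ⟨⟨j0, hfi, by rw [h]; nlinarith⟩, hfik'⟩

include hs in
lemma Rk_trans {b1 b2 b3 : ℝ} (h12 : Rk u s k b1 b2) (h23 : Rk u s k b2 b3) :
    Rk u s k b1 b3 := by
  obtain ⟨⟨j1, hj1, hg1⟩, hle12⟩ := h12
  obtain ⟨⟨j2, hj2, hg2⟩, hle23⟩ := h23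
  have hj1k : j1 ≤ k := by
    rw [firstIdx_comm] at hle12; rw [hj1] at hle12; exact_mod_cast hle12
  have hj2k : j2 ≤ k := by
    rw [firstIdx_comm] at hle23; rw [hj2] at hle23; exact_mod_cast hle23
  obtain ⟨hfi, hsgn⟩ := prec_trans hs hj1 hg1 hj2 hg2
  refine ⟨⟨min j1 j2, hfi, hsgn⟩, ?_⟩
  rw [firstIdx_comm, hfi]
  have : min j1 j2 ≤ k := le_trans (min_le_left _ _) hj1k
  exact_mod_cast this

end GapOrder

section GapSums
variable {u s : ℕ → ℝ} {k : ℕ}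
variable (hu : ∀ j, 1 ≤ j → u j ∈ Set.Ioo (0:ℝ) 1)
variable (hs : ∀ j, 1 ≤ j → s j = 1 ∨ s j = -1)

include hu in
lemma Icc_diff_bnd :
    Set.Icc (0:ℝ) 1 \ ↑(bnd u k) = ⋃ b ∈ (bnd u k).erase 1, Set.Ioo b (nxt u k b) := by
  ext y
  constructor
  · rintro ⟨hyI, hyn⟩
    obtain ⟨b, hb, hmem⟩ := gap_cover hu hyI hyn
    exact Set.mem_biUnion hb hmem
  · intro hy
    rw [Set.mem_iUnion₂] at hy
    obtain ⟨b, hb, hmem⟩ := hy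
    exact ⟨gap_subset_Icc hu hb hmem, fun hc => gap_inter_bnd hu hb hc hmem⟩

include hu in
lemma vol_biUnion_gaps {F : Finset ℝ} (hF : F ⊆ (bnd u k).erase 1) :
    volume (⋃ b ∈ F, Set.Ioo b (nxt u k b)) = ENNReal.ofReal (∑ b ∈ F, (nxt u k b - b)) := by
  have hd : (↑F : Set ℝ).Pairwise (Function.onFun Disjoint fun b => Set.Ioo b (nxt u k b)) := by
    intro b hb b' hb' hne
    exact gap_disjoint hu (hF (by exact_mod_cast hb)) (hF (by exact_mod_cast hb')) hne
  rw [measure_biUnion_finset hd (fun b _ => measurableSet_Ioo)]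
  rw [ENNReal.ofReal_sum_of_nonneg (fun b hb => le_of_lt (sub_pos.mpr (nxt_spec hu (hF hb)).1))]
  exact Finset.sum_congr rfl (fun b _ => Real.volume_Ioo)

include hu in
lemma sum_gaps_eq_one : ∑ b ∈ (bnd u k).erase 1, (nxt u k b - b) = 1 := by
  have hnull : volume (↑(bnd u k) : Set ℝ) = 0 :=
    Set.Finite.measure_zero (Finset.finite_toSet _) volume
  have h1 : volume (Set.Icc (0:ℝ) 1 \ ↑(bnd u k)) = 1 := by
    rw [measure_diff_null hnull, Real.volume_Icc]
    norm_num
  rw [Icc_diff_bnd hu, vol_biUnion_gaps hu (Finset.Subset.refl _)] at h1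
  have hnn : 0 ≤ ∑ b ∈ (bnd u k).erase 1, (nxt u k b - b) :=
    Finset.sum_nonneg (fun b hb => le_of_lt (sub_pos.mpr (nxt_spec hu hb).1))
  rw [show (1:ENNReal) = ENNReal.ofReal 1 by simp] at h1
  exact (ENNReal.ofReal_eq_ofReal_iff hnn zero_le_one).mp h1

/-- The cumulative weight of the gaps `≺`-below the gap of `b`. -/
noncomputable def csum (u s : ℕ → ℝ) (k : ℕ) (b : ℝ) : ℝ :=
  ∑ b' ∈ ((bnd u k).erase 1).filter (fun b' => Rk u s k b' b), (nxt u k b' - b')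

include hu hs in
lemma phiK_eq_on_gap {b x : ℝ} (hb : b ∈ (bnd u k).erase 1)
    (hx : x ∈ Set.Ioo b (nxt u k b)) : phiK u s k x = csum u s k b := by
  classical
  set T := {y : ℝ | y ∈ Set.Icc (0:ℝ) 1 ∧ Prec u s y x ∧ firstIdx u x y ≤ (k : ℕ∞)} with hT
  set Fsel := ((bnd u k).erase 1).filter (fun b' => Rk u s k b' b) with hFsel
  have hTd : T \ ↑(bnd u k) = ⋃ b' ∈ Fsel, Set.Ioo b' (nxt u k b') := by
    ext y
    constructor
    · rintro ⟨⟨hyI, hyP, hyle⟩, hyn⟩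
      obtain ⟨b0, hb0, hmem⟩ := gap_cover hu hyI hyn
      have hR : Rk u s k b0 b := (rel_iff_of_gaps hu hs hb hb0 hx hmem).mp ⟨hyP, hyle⟩
      exact Set.mem_biUnion (Finset.mem_filter.mpr ⟨hb0, hR⟩) hmem
    · intro hy
      rw [Set.mem_iUnion₂] at hy
      obtain ⟨b', hb', hmem⟩ := hy
      obtain ⟨hb'i, hR⟩ := Finset.mem_filter.mp hb'
      obtain ⟨hP, hle⟩ := (rel_iff_of_gaps hu hs hb hb'i hx hmem).mpr hR
      exact ⟨⟨gap_subset_Icc hu hb'i hmem, hP, hle⟩,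
        fun hc => gap_inter_bnd hu hb'i hc hmem⟩
  have hnull : volume (↑(bnd u k) : Set ℝ) = 0 :=
    Set.Finite.measure_zero (Finset.finite_toSet _) volume
  have hvol : volume T = ENNReal.ofReal (csum u s k b) := by
    rw [← measure_diff_null hnull, hTd,
      vol_biUnion_gaps hu (Finset.filter_subset _ _)]
    rfl
  rw [phiK, ← hT, hvol, ENNReal.toReal_ofReal]
  exact Finset.sum_nonneg (fun b' hb' =>
    le_of_lt (sub_pos.mpr (nxt_spec hu (Finset.mem_filter.mp hb').1).1))

end GapSums

section Sandwich
variable {u s : ℕ → ℝ}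
variable (hu : ∀ j, 1 ≤ j → u j ∈ Set.Ioo (0:ℝ) 1)
variable (hs : ∀ j, 1 ≤ j → s j = 1 ∨ s j = -1)

include hu hs in
lemma vol_phi_level (t : ℝ) (ht0 : 0 ≤ t) (ht1 : t ≤ 1) (k : ℕ) :
    ENNReal.ofReal (t - 2 * Dfun u k) ≤ volume {x : ℝ | x ∈ Set.Icc (0:ℝ) 1 ∧ phi u s x ≤ t} ∧
    volume {x : ℝ | x ∈ Set.Icc (0:ℝ) 1 ∧ phi u s x ≤ t} ≤
      ENNReal.ofReal (t + 2 * Dfun u k) := by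
  classical
  set ι := (bnd u k).erase 1 with hι
  set w : ℝ → ℝ := fun b => nxt u k b - b with hw
  set E := {x : ℝ | x ∈ Set.Icc (0:ℝ) 1 ∧ phi u s x ≤ t} with hE
  have htot : ∀ a ∈ ι, ∀ b ∈ ι, a ≠ b → Rk u s k a b ∨ Rk u s k b a :=
    fun a ha b hb hne => Rk_total hu hs ha hb hne
  have htr : ∀ a ∈ ι, ∀ b ∈ ι, ∀ c ∈ ι, Rk u s k a b → Rk u s k b c → Rk u s k a c :=
    fun a _ b _ c _ hab hbc => Rk_trans hs hab hbc
  have hirr : ∀ a ∈ ι, ¬ Rk u s k a a := fun a _ => Rk_irrefl a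
  have hwpos : ∀ b ∈ ι, 0 ≤ w b := fun b hb => le_of_lt (sub_pos.mpr (nxt_spec hu hb).1)
  have hwM : ∀ b ∈ ι, w b ≤ 2 * Dfun u k := by
    intro b hb
    exact gap_le_two_Dfun k (mem_bnd_Icc hu (Finset.mem_of_mem_erase hb))
      (mem_bnd_Icc hu (nxt_spec hu hb).2.1) (nxt_spec hu hb).1.le (gap_no_u hu hb)
  have hcsum : ∀ r : ℝ, ι.filter (fun a => (∑ b ∈ ι.filter (fun b => Rk u s k b a), w b) ≤ r) =
      ι.filter (fun b => csum u s k b ≤ r) := by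
    intro r
    apply Finset.filter_congr
    intro b _
    rw [csum]
  constructor
  · -- lower bound
    have hlow := le_sum_filter_csum (r := Rk u s k) ι htot htr hirr w hwpos (t - 2 * Dfun u k)
      (by rw [show ∑ a ∈ ι, w a = 1 from sum_gaps_eq_one hu]
          have := Dfun_nonneg (u := u) k; linarith)
    rw [hcsum] at hlow
    have hsub : (⋃ b ∈ ι.filter (fun b => csum u s k b ≤ t - 2 * Dfun u k),
        Set.Ioo b (nxt u k b)) ⊆ E := by
      intro x hx
      rw [Set.mem_iUnion₂] at hx
      obtain ⟨b, hb, hmem⟩ := hx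
      obtain ⟨hbι, hbc⟩ := Finset.mem_filter.mp hb
      have hxI : x ∈ Set.Icc (0:ℝ) 1 := gap_subset_Icc hu hbι hmem
      refine ⟨hxI, ?_⟩
      have h1 : phi u s x - phiK u s k x ≤ 2 * Dfun u k := phi_sub_phiK_le hxI
      have h2 : phiK u s k x = csum u s k b := phiK_eq_on_gap hu hs hbι hmem
      linarith
    calc ENNReal.ofReal (t - 2 * Dfun u k)
        ≤ ENNReal.ofReal (∑ b ∈ ι.filter (fun b => csum u s k b ≤ t - 2 * Dfun u k), w b) :=
          ENNReal.ofReal_le_ofReal hlow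
      _ = volume (⋃ b ∈ ι.filter (fun b => csum u s k b ≤ t - 2 * Dfun u k),
            Set.Ioo b (nxt u k b)) := (vol_biUnion_gaps hu (Finset.filter_subset _ _)).symm
      _ ≤ volume E := measure_mono hsub
  · -- upper bound
    have hup := sum_filter_csum_le (r := Rk u s k) ι htot htr hirr w hwpos (2 * Dfun u k)
      (by have := Dfun_nonneg (u := u) k; linarith) hwM t ht0
    rw [hcsum] at hup
    have hsub : E ⊆ ↑(bnd u k) ∪
        ⋃ b ∈ ι.filter (fun b => csum u s k b ≤ t), Set.Ioo b (nxt u k b) := by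
      rintro x ⟨hxI, hxφ⟩
      by_cases hxb : x ∈ bnd u k
      · exact Or.inl hxb
      · obtain ⟨b, hb, hmem⟩ := gap_cover hu hxI hxb
        have h2 : phiK u s k x = csum u s k b := phiK_eq_on_gap hu hs hb hmem
        have h3 : phiK u s k x ≤ phi u s x := phiK_le_phi k x
        exact Or.inr (Set.mem_biUnion (Finset.mem_filter.mpr ⟨hb, by linarith⟩) hmem)
    calc volume E ≤ volume ((↑(bnd u k) : Set ℝ) ∪
          ⋃ b ∈ ι.filter (fun b => csum u s k b ≤ t), Set.Ioo b (nxt u k b)) :=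
        measure_mono hsub
      _ ≤ volume (↑(bnd u k) : Set ℝ) +
          volume (⋃ b ∈ ι.filter (fun b => csum u s k b ≤ t), Set.Ioo b (nxt u k b)) :=
        measure_union_le _ _
      _ = volume (⋃ b ∈ ι.filter (fun b => csum u s k b ≤ t), Set.Ioo b (nxt u k b)) := by
        rw [Set.Finite.measure_zero (Finset.finite_toSet _) volume, zero_add]
      _ = ENNReal.ofReal (∑ b ∈ ι.filter (fun b => csum u s k b ≤ t), w b) :=
        vol_biUnion_gaps hu (Finset.filter_subset _ _)
      _ ≤ ENNReal.ofReal (t + 2 * Dfun u k) := ENNReal.ofReal_le_ofReal hup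

end Sandwich

section MP
variable {u s : ℕ → ℝ}
variable (hu : ∀ j, 1 ≤ j → u j ∈ Set.Ioo (0:ℝ) 1)
variable (hs : ∀ j, 1 ≤ j → s j = 1 ∨ s j = -1)

include hu hs in
lemma map_phi_eq (hGC : Tendsto (Dfun u) atTop (nhds 0)) :
    Measure.map (phi u s) (volume.restrict (Set.Icc (0:ℝ) 1)) =
      volume.restrict (Set.Icc (0:ℝ) 1) := by
  have hIccvol : volume (Set.Icc (0:ℝ) 1) = 1 := by rw [Real.volume_Icc]; norm_num
  haveI hfin : IsFiniteMeasure (volume.restrict (Set.Icc (0:ℝ) 1)) := by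
    constructor
    rw [Measure.restrict_apply_univ, hIccvol]
    exact ENNReal.one_lt_top
  haveI : IsFiniteMeasure (Measure.map (phi u s) (volume.restrict (Set.Icc (0:ℝ) 1))) :=
    Measure.isFiniteMeasure_map _ _
  apply MeasureTheory.Measure.ext_of_Iic
  intro a
  rw [Measure.map_apply_of_aemeasurable (measurable_phi u s).aemeasurable measurableSet_Iic,
    Measure.restrict_apply' measurableSet_Icc, Measure.restrict_apply' measurableSet_Icc]
  have hset : phi u s ⁻¹' Set.Iic a ∩ Set.Icc (0:ℝ) 1 =
      {x : ℝ | x ∈ Set.Icc (0:ℝ) 1 ∧ phi u s x ≤ a} := by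
    ext x
    simp only [Set.mem_inter_iff, Set.mem_preimage, Set.mem_Iic, Set.mem_setOf_eq]
    tauto
  rw [hset]
  rcases lt_or_ge a 0 with ha | ha
  · have h1 : {x : ℝ | x ∈ Set.Icc (0:ℝ) 1 ∧ phi u s x ≤ a} = ∅ := by
      rw [Set.eq_empty_iff_forall_notMem]
      rintro x ⟨-, hx2⟩
      exact absurd (le_trans (phi_nonneg x) hx2) (not_le.mpr ha)
    have h2 : Set.Iic a ∩ Set.Icc (0:ℝ) 1 = ∅ := by
      rw [Set.eq_empty_iff_forall_notMem]
      rintro x ⟨hx1, hx2, -⟩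
      rw [Set.mem_Iic] at hx1
      linarith
    rw [h1, h2]
  rcases le_or_gt 1 a with ha1 | ha1
  · have h1 : {x : ℝ | x ∈ Set.Icc (0:ℝ) 1 ∧ phi u s x ≤ a} = Set.Icc (0:ℝ) 1 := by
      ext x
      simp only [Set.mem_setOf_eq]
      exact ⟨fun h => h.1, fun hx => ⟨hx, le_trans (phi_le_one x) ha1⟩⟩
    have h2 : Set.Iic a ∩ Set.Icc (0:ℝ) 1 = Set.Icc (0:ℝ) 1 := by
      ext x
      simp only [Set.mem_inter_iff, Set.mem_Iic]
      exact ⟨fun h => h.2, fun hx => ⟨le_trans hx.2 ha1, hx⟩⟩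
    rw [h1, h2]
  · -- 0 ≤ a < 1
    set V := volume {x : ℝ | x ∈ Set.Icc (0:ℝ) 1 ∧ phi u s x ≤ a} with hV
    have hVfin : V ≠ ⊤ := by
      have h1 : V ≤ volume (Set.Icc (0:ℝ) 1) := measure_mono (fun x hx => hx.1)
      rw [hIccvol] at h1
      exact (h1.trans_lt ENNReal.one_lt_top).ne
    have hbounds := fun k => vol_phi_level hu hs a ha ha1.le k
    have hlow : ∀ k : ℕ, a - 2 * Dfun u k ≤ V.toReal := by
      intro k
      rcases le_or_gt (a - 2 * Dfun u k) 0 with h | h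
      · exact le_trans h ENNReal.toReal_nonneg
      · have := (hbounds k).1
        have h2 := ENNReal.toReal_mono hVfin this
        rwa [ENNReal.toReal_ofReal h.le] at h2
    have hhigh : ∀ k : ℕ, V.toReal ≤ a + 2 * Dfun u k := by
      intro k
      have := (hbounds k).2
      have h2 := ENNReal.toReal_mono (by simp) this
      rwa [ENNReal.toReal_ofReal (by have := Dfun_nonneg (u := u) k; linarith)] at h2
    have hta : Tendsto (fun k : ℕ => a + 2 * Dfun u k) atTop (nhds a) := by
      have : Tendsto (fun k : ℕ => 2 * Dfun u k) atTop (nhds 0) := by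
        simpa using hGC.const_mul 2
      simpa using tendsto_const_nhds.add this
    have htb : Tendsto (fun k : ℕ => a - 2 * Dfun u k) atTop (nhds a) := by
      have : Tendsto (fun k : ℕ => 2 * Dfun u k) atTop (nhds 0) := by
        simpa using hGC.const_mul 2
      simpa using tendsto_const_nhds.sub this
    have hVa : V.toReal = a :=
      le_antisymm (ge_of_tendsto hta (Eventually.of_forall hhigh))
        (le_of_tendsto htb (Eventually.of_forall hlow))
    have h2 : Set.Iic a ∩ Set.Icc (0:ℝ) 1 = Set.Icc (0:ℝ) a := by
      ext x
      simp only [Set.mem_inter_iff, Set.mem_Iic, Set.mem_Icc]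
      constructor
      · rintro ⟨h1', h2', -⟩; exact ⟨h2', h1'⟩
      · rintro ⟨h1', h2'⟩; exact ⟨h2', h1', by linarith⟩
    rw [h2, Real.volume_Icc, sub_zero, ← hVa, ENNReal.ofReal_toReal hVfin]

end MP

section Cont
variable {u s : ℕ → ℝ}
variable (hs : ∀ j, 1 ≤ j → s j = 1 ∨ s j = -1)

include hs in
lemma mem_gapIcc_of_diff {x x' : ℝ} {k : ℕ}
    (hside : ∀ i, 1 ≤ i → i ≤ k → u i ∉ gapInterval x x') {y : ℝ}
    (hy : y ∈ Set.Icc (0:ℝ) 1) (hdiff : ¬ (Prec u s y x ↔ Prec u s y x')) :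
    y ∈ Set.Icc (aK u k x) (bK u k x) := by
  apply mem_Icc_aK_bK hy
  intro j h1 h2 hmem
  obtain ⟨j0, hfi, hj01, -, hmin⟩ := firstIdx_spec ⟨j, h1, hmem⟩
  have hj0k : j0 ≤ k := by
    by_contra hc
    push_neg at hc
    exact hmin j h1 (lt_of_le_of_lt h2 hc) hmem
  obtain ⟨-, hiff, -⟩ := prec_transfer (hs j0 hj01) hside hfi hj0k
  exact hdiff hiff

include hs in
lemma abs_phi_sub_le {x x' : ℝ} {k : ℕ} (hx : x ∈ Set.Icc (0:ℝ) 1)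
    (hside : ∀ i, 1 ≤ i → i ≤ k → u i ∉ gapInterval x x') :
    |phi u s x' - phi u s x| ≤ bK u k x - aK u k x := by
  set A := {y : ℝ | y ∈ Set.Icc (0:ℝ) 1 ∧ Prec u s y x} with hA
  set A' := {y : ℝ | y ∈ Set.Icc (0:ℝ) 1 ∧ Prec u s y x'} with hA'
  have hfin : ∀ S : Set ℝ, S ⊆ Set.Icc (0:ℝ) 1 → volume S ≠ ⊤ := by
    intro S hS
    have h1 : volume S ≤ volume (Set.Icc (0:ℝ) 1) := measure_mono hS
    rw [Real.volume_Icc] at h1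
    exact (h1.trans_lt (by simp)).ne
  have hAI : A ⊆ Set.Icc (0:ℝ) 1 := fun y hy => hy.1
  have hA'I : A' ⊆ Set.Icc (0:ℝ) 1 := fun y hy => hy.1
  have hd1 : A' \ A ⊆ Set.Icc (aK u k x) (bK u k x) := by
    rintro y ⟨⟨hyI, hyP⟩, hyn⟩
    refine mem_gapIcc_of_diff hs hside hyI (fun hiff => ?_)
    exact hyn ⟨hyI, hiff.mpr hyP⟩
  have hd2 : A \ A' ⊆ Set.Icc (aK u k x) (bK u k x) := by
    rintro y ⟨⟨hyI, hyP⟩, hyn⟩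
    refine mem_gapIcc_of_diff hs hside hyI (fun hiff => ?_)
    exact hyn ⟨hyI, hiff.mp hyP⟩
  have hvol : (volume (Set.Icc (aK u k x) (bK u k x))).toReal = bK u k x - aK u k x := by
    rw [Real.volume_Icc, ENNReal.toReal_ofReal]
    have h1 : aK u k x ≤ x := aK_le hx
    have h2 : x ≤ bK u k x := le_bK hx
    linarith
  have key : ∀ (S T : Set ℝ), S ⊆ Set.Icc (0:ℝ) 1 → T ⊆ Set.Icc (0:ℝ) 1 →
      S \ T ⊆ Set.Icc (aK u k x) (bK u k x) →
      (volume S).toReal - (volume T).toReal ≤ bK u k x - aK u k x := by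
    intro S T hSI hTI hd
    have h1 : volume S ≤ volume (S \ T) + volume T :=
      le_trans (measure_mono (Set.subset_diff_union S T)) (measure_union_le _ _)
    have h2 : (volume S).toReal ≤ (volume (S \ T)).toReal + (volume T).toReal := by
      have := ENNReal.toReal_mono (ENNReal.add_ne_top.mpr
        ⟨hfin _ ((Set.diff_subset).trans hSI), hfin T hTI⟩) h1
      rwa [ENNReal.toReal_add (hfin _ ((Set.diff_subset).trans hSI)) (hfin T hTI)] at this
    have hIccsub : Set.Icc (aK u k x) (bK u k x) ⊆ Set.Icc (0:ℝ) 1 := fun y hy =>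
      ⟨le_trans zero_le_aK hy.1, le_trans hy.2 bK_le_one⟩
    have h3 : (volume (S \ T)).toReal ≤ bK u k x - aK u k x := by
      rw [← hvol]
      exact ENNReal.toReal_mono (hfin _ hIccsub) (measure_mono hd)
    linarith
  rw [abs_sub_le_iff]
  exact ⟨key A' A hA'I hAI hd1, key A A' hAI hA'I hd2⟩

end Cont

/-- assume the `u_j` pairwise distinct with Glivenko–Cantelli-type uniform
convergence of the empirical distribution functions. Then: (i) any two distinct points of
`[0,1]` are `≺`-comparable; (ii) `φ_k → φ` uniformly on `[0,1]`; (iii) `φ` is continuous at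
every point of `[0,1] ∖ {u_j}`; (iv) `φ` preserves Lebesgue measure on `[0,1]`, and hence the
pushforward of Leb under `x ↦ (x, φ(x))` is a permuton (both marginals are Leb). -/
theorem prec_total_phi_uniform_continuous_measurePreserving
    (u s : ℕ → ℝ)
    (hu : ∀ j, 1 ≤ j → u j ∈ Set.Ioo (0:ℝ) 1)
    (hs : ∀ j, 1 ≤ j → s j = 1 ∨ s j = -1)
    (hdist : ∀ j k, 1 ≤ j → 1 ≤ k → u j = u k → j = k)
    (hGC : Tendsto (fun n : ℕ => ⨆ x : Set.Icc (0:ℝ) 1,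
        |(x : ℝ) - (1 / (n : ℝ)) * ∑ j ∈ Finset.Icc 1 n,
          (if u j ≤ (x : ℝ) then (1:ℝ) else 0)|) atTop (nhds 0)) :
    (∀ x ∈ Set.Icc (0:ℝ) 1, ∀ y ∈ Set.Icc (0:ℝ) 1, x ≠ y →
      Prec u s x y ∨ Prec u s y x) ∧
    TendstoUniformlyOn (fun k => phiK u s k) (phi u s) atTop (Set.Icc (0:ℝ) 1) ∧
    (∀ x ∈ Set.Icc (0:ℝ) 1, (∀ j, 1 ≤ j → u j ≠ x) →
      ContinuousWithinAt (phi u s) (Set.Icc (0:ℝ) 1) x) ∧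
    (Measure.map (phi u s) (volume.restrict (Set.Icc (0:ℝ) 1)) =
      volume.restrict (Set.Icc (0:ℝ) 1)) ∧
    (Measure.map Prod.fst
        (Measure.map (fun x => (x, phi u s x)) (volume.restrict (Set.Icc (0:ℝ) 1))) =
      volume.restrict (Set.Icc (0:ℝ) 1)) ∧
    (Measure.map Prod.snd
        (Measure.map (fun x => (x, phi u s x)) (volume.restrict (Set.Icc (0:ℝ) 1))) =
      volume.restrict (Set.Icc (0:ℝ) 1)) := by
  have hGC' : Tendsto (Dfun u) atTop (nhds 0) := hGC
  refine ⟨?_, ?_, ?_, ?_, ?_, ?_⟩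
  · -- (i) comparability
    intro x hx y hy hxy
    exact comparable_of_GC hs hGC' hx hy hxy
  · -- (ii) uniform convergence
    rw [Metric.tendstoUniformlyOn_iff]
    intro ε hε
    filter_upwards [hGC'.eventually_lt_const (show (0:ℝ) < ε/4 by linarith)] with k hk
    intro x hx
    have h1 : 0 ≤ phi u s x - phiK u s k x := sub_nonneg.mpr (phiK_le_phi k x)
    have h2 : phi u s x - phiK u s k x ≤ 2 * Dfun u k := phi_sub_phiK_le hx
    rw [Real.dist_eq, abs_of_nonneg h1]
    linarith
  · -- (iii) continuity away from the u_j
    intro x hx hnu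
    rw [Metric.continuousWithinAt_iff]
    intro ε hε
    obtain ⟨k, hk⟩ := (hGC'.eventually_lt_const (show (0:ℝ) < ε/8 by linarith)).exists
    classical
    set F : Finset ℝ := insert 1 ((Finset.Icc 1 k).image (fun j => |u j - x|)) with hF
    have hFne : F.Nonempty := Finset.insert_nonempty _ _
    set δ := F.min' hFne with hδ
    have hδpos : 0 < δ := by
      rw [hδ, Finset.lt_min'_iff]
      intro r hr
      rcases Finset.mem_insert.mp hr with rfl | hr
      · norm_num
      · obtain ⟨j, hj, rfl⟩ := Finset.mem_image.mp hr
        obtain ⟨hj1, -⟩ := Finset.mem_Icc.mp hj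
        exact abs_pos.mpr (sub_ne_zero.mpr (hnu j hj1))
    refine ⟨δ, hδpos, ?_⟩
    intro x' hx' hdist
    have hside : ∀ i, 1 ≤ i → i ≤ k → u i ∉ gapInterval x x' := by
      intro i h1 h2 hmem
      have habs : |u i - x| ≤ |x' - x| := by
        rw [mem_gapInterval] at hmem
        by_cases hlt : x < u i
        · have h3 : u i ≤ x' := hmem.mp hlt
          rw [abs_of_pos (by linarith : (0:ℝ) < u i - x)]
          calc u i - x ≤ x' - x := by linarith
            _ ≤ |x' - x| := le_abs_self _
        · push_neg at hlt
          have h3 : ¬ u i ≤ x' := fun h => hlt.not_gt (hmem.mpr h)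
          push_neg at h3
          rw [abs_of_nonpos (by linarith : u i - x ≤ 0)]
          calc -(u i - x) = x - u i := by ring
            _ ≤ x - x' := by linarith
            _ ≤ |x' - x| := by rw [abs_sub_comm]; exact le_abs_self _
      have hmemF : |u i - x| ∈ F := Finset.mem_insert.mpr (Or.inr
        (Finset.mem_image.mpr ⟨i, Finset.mem_Icc.mpr ⟨h1, h2⟩, rfl⟩))
      have hd : δ ≤ |u i - x| := Finset.min'_le _ _ hmemF
      rw [Real.dist_eq] at hdist
      linarith
    have h1 := abs_phi_sub_le hs hx hside
    have h2 : bK u k x - aK u k x ≤ 2 * Dfun u k := bK_sub_aK_le hx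
    rw [Real.dist_eq]
    calc |phi u s x' - phi u s x| ≤ bK u k x - aK u k x := h1
      _ ≤ 2 * Dfun u k := h2
      _ < ε := by linarith
  · exact map_phi_eq hu hs hGC'
  · -- first marginal
    rw [Measure.map_map measurable_fst (show Measurable (fun x : ℝ => (x, phi u s x)) from measurable_id.prodMk (measurable_phi u s))]
    have h : (Prod.fst ∘ fun x : ℝ => (x, phi u s x)) = id := rfl
    rw [h, Measure.map_id]
  · -- second marginal
    rw [Measure.map_map measurable_snd (show Measurable (fun x : ℝ => (x, phi u s x)) from measurable_id.prodMk (measurable_phi u s))]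
    have h : (Prod.snd ∘ fun x : ℝ => (x, phi u s x)) = phi u s := rfl
    rw [h]
    exact map_phi_eq hu hs hGC'
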